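/- In H = ℓ²(ℕ; ℝ²), for angles θ_i ∈ (0, π/2] with θ_i → 0, let U = ⊕_i ℝe_{θ_i} and V = ⊕_i ℝe_0 (e_θ the unit vector at angle θ), and apply the three-operator splitting with f = ι_U + (a/2)‖·‖², g = ι_V, h = (1/2)‖·‖², γ = 1, λ_k ≡ 1, a ≥ 0. The resulting operator T is block-diagonal with blocks T_i having eigenvector z_i = (−2cos θ_i sin θ_i/(1+a−2sin²θ_i), 1) with eigenvalue b_i = (a − 2(1−cos θ_i)² + 1)/(a+1). For every function F : ℝ₊ → (0,1) strictly decreasing to 0, the angles θ_i and initial point z⁰ can be chosen so that ‖z^k − z*‖ ≥ e^{-1}F(k) for all k, even though z^k → z* = 0 strongly. In particular, the iteration fails to converge linearly even though both f and h are strongly convex when a > 0. -/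

import Mathlib

open Filter
open scoped ENNReal

open scoped ENNReal RealInnerProductSpace

namespace SlowConvAux

noncomputable section

abbrev E2 : Type := EuclideanSpace ℝ (Fin 2)
abbrev Hsp : Type := lp (fun _ : ℕ => E2) 2

def vec (x y : ℝ) : E2 := (WithLp.equiv 2 (Fin 2 → ℝ)).symm ![x, y]

@[simp] lemma vec_apply0 (x y : ℝ) : vec x y 0 = x := rfl
@[simp] lemma vec_apply1 (x y : ℝ) : vec x y 1 = y := rfl

lemma E2_ext {w z : E2} (h0 : w 0 = z 0) (h1 : w 1 = z 1) : w = z := by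
  ext j; fin_cases j <;> assumption

@[simp] lemma smul_coord (r : ℝ) (z : E2) (j : Fin 2) : (r • z) j = r * z j := rfl
@[simp] lemma add_coord (z z' : E2) (j : Fin 2) : (z + z') j = z j + z' j := rfl
@[simp] lemma sub_coord (z z' : E2) (j : Fin 2) : (z - z') j = z j - z' j := rfl

lemma inner_E2 (w z : E2) : ⟪w, z⟫ = w 0 * z 0 + w 1 * z 1 := by
  simp [PiLp.inner_apply, Fin.sum_univ_two, RCLike.inner_apply, mul_comm]

lemma norm_vec (x y : ℝ) : ‖vec x y‖ = Real.sqrt (x ^ 2 + y ^ 2) := by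
  rw [EuclideanSpace.norm_eq]
  simp [Fin.sum_univ_two, sq_abs]

lemma abs_coord_le (w : E2) (j : Fin 2) : |w j| ≤ ‖w‖ := by
  rw [EuclideanSpace.norm_eq]
  fin_cases j
  · calc |w 0| = Real.sqrt (|w 0| ^ 2) := by rw [Real.sqrt_sq (abs_nonneg _)]
    _ ≤ _ := by
        apply Real.sqrt_le_sqrt; simp [Fin.sum_univ_two]; positivity
  · calc |w 1| = Real.sqrt (|w 1| ^ 2) := by rw [Real.sqrt_sq (abs_nonneg _)]
    _ ≤ _ := by
        apply Real.sqrt_le_sqrt; simp [Fin.sum_univ_two]; positivity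

def proj (w z : E2) : E2 := ⟪w, z⟫ • w

lemma norm_proj_le {w : E2} (hw : ‖w‖ = 1) (z : E2) : ‖proj w z‖ ≤ ‖z‖ := by
  rw [proj, norm_smul, hw, mul_one]
  calc ‖⟪w, z⟫‖ = |⟪w, z⟫| := rfl
  _ ≤ ‖w‖ * ‖z‖ := abs_real_inner_le_norm w z
  _ = ‖z‖ := by rw [hw, one_mul]

lemma block_eq (cc ss pp bb : ℝ) (hb : 1 - cc * ss ^ 2 = bb) (y : E2) :
    y - proj (vec 1 0) y + cc • proj (vec pp ss) (proj (vec 1 0) y - y)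
      = (y 1) • vec (-(cc * ss * pp)) bb := by
  apply E2_ext <;>
  · simp only [proj, inner_E2, add_coord, sub_coord, smul_coord,
      vec_apply0, vec_apply1]
    subst hb; ring

variable (w : ℕ → E2)

lemma pmap_mem (hw : ∀ i, ‖w i‖ = 1) (x : Hsp) :
    Memℓp (fun i => proj (w i) (x i)) 2 := by
  apply memℓp_gen
  have h2 : ((2 : ℝ≥0∞)).toReal = 2 := by norm_num
  rw [h2]
  have hs : Summable fun i => ‖x i‖ ^ (2 : ℝ) := by
    have := (lp.memℓp x).summable (p := 2) (by norm_num)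
    simpa using this
  apply Summable.of_nonneg_of_le (fun i => by positivity) _ hs
  intro i
  have h := norm_proj_le (hw i) (x i)
  have := norm_nonneg (proj (w i) (x i))
  gcongr

def Pmap (hw : ∀ i, ‖w i‖ = 1) : Hsp → Hsp :=
  fun x => ⟨fun i => proj (w i) (x i), pmap_mem w hw x⟩

lemma Pmap_apply (hw : ∀ i, ‖w i‖ = 1) (x : Hsp) (i : ℕ) :
    (Pmap w hw x) i = proj (w i) (x i) := rfl

def DiagU : Submodule ℝ Hsp where
  carrier := {x : Hsp | ∀ i, ∃ r : ℝ, (x : ∀ _ : ℕ, E2) i = r • w i}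
  zero_mem' := fun i => ⟨0, by simp [lp.coeFn_zero]⟩
  add_mem' := by
    intro x y hx hy i
    obtain ⟨r, hr⟩ := hx i
    obtain ⟨r', hr'⟩ := hy i
    exact ⟨r + r', by rw [lp.coeFn_add]; simp [hr, hr', add_smul]⟩
  smul_mem' := by
    intro c x hx i
    obtain ⟨r, hr⟩ := hx i
    exact ⟨c * r, by rw [lp.coeFn_smul]; simp [hr, smul_smul]⟩

lemma mem_DiagU {x : Hsp} : x ∈ DiagU w ↔ ∀ i, ∃ r : ℝ, x i = r • w i := Iff.rfl

lemma Pmap_mem_DiagU (hw : ∀ i, ‖w i‖ = 1) (x : Hsp) : Pmap w hw x ∈ DiagU w :=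
  fun i => ⟨⟪w i, x i⟫, rfl⟩

lemma eval_continuous (i : ℕ) : Continuous (fun x : Hsp => x i) := by
  apply (LipschitzWith.of_dist_le_mul (K := 1) ?_).continuous
  intro x y
  rw [NNReal.coe_one, one_mul, dist_eq_norm, dist_eq_norm]
  have : x i - y i = (x - y) i := by rw [lp.coeFn_sub]; rfl
  rw [this]
  exact lp.norm_apply_le_norm (by norm_num) (x - y) i

lemma DiagU_closed : IsClosed ((DiagU w : Submodule ℝ Hsp) : Set Hsp) := by
  have : ((DiagU w : Submodule ℝ Hsp) : Set Hsp)
      = ⋂ i, (fun x : Hsp => x i) ⁻¹' ((ℝ ∙ w i) : Set E2) := by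
    ext x
    simp only [Set.mem_iInter, Set.mem_preimage, SetLike.mem_coe, mem_DiagU,
      Submodule.mem_span_singleton]
    constructor
    · intro h i; obtain ⟨r, hr⟩ := h i; exact ⟨r, hr.symm⟩
    · intro h i; obtain ⟨r, hr⟩ := h i; exact ⟨r, hr.symm⟩
  rw [this]
  exact isClosed_iInter fun i =>
    (Submodule.closed_of_finiteDimensional (ℝ ∙ w i)).preimage (eval_continuous i)

lemma sub_Pmap_mem_orth (hw : ∀ i, ‖w i‖ = 1) (x : Hsp) :
    x - Pmap w hw x ∈ (DiagU w)ᗮ := by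
  rw [Submodule.mem_orthogonal]
  intro y hy
  rw [lp.inner_eq_tsum]
  have : ∀ i, ⟪y i, (x - Pmap w hw x) i⟫ = 0 := by
    intro i
    obtain ⟨r, hr⟩ := hy i
    have hsub : (x - Pmap w hw x) i = x i - proj (w i) (x i) := by
      rw [lp.coeFn_sub]; rfl
    rw [hsub, hr, proj]
    rw [inner_sub_right, real_inner_smul_left, real_inner_smul_left,
      real_inner_smul_right, real_inner_self_eq_norm_sq, hw i]
    ring
  simp only [this, tsum_zero]

lemma exists_N (M : ℕ → ℕ) (A : ℕ) :
    ∃ N : ℕ → ℕ, N 0 = 0 ∧ StrictMono N ∧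
      (∀ k, A ≤ N (k + 1)) ∧ (∀ k, M (k + 1) ≤ N (k + 1)) := by
  refine ⟨fun k => Nat.rec 0 (fun k Nk => max (Nk + 1) (max A (M (k + 1)))) k,
    rfl, strictMono_nat_of_lt_succ fun k => ?_, fun k => ?_, fun k => ?_⟩
  · exact lt_of_lt_of_le (Nat.lt_succ_self _) (le_max_left _ _)
  · exact le_trans (le_max_left _ _) (le_max_right _ _)
  · exact le_trans (le_max_right _ _) (le_max_right _ _)

lemma exists_block {N : ℕ → ℕ} (h0 : N 0 = 0) (hm : StrictMono N) (k : ℕ) :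
    ∃ j, N j ≤ k ∧ k < N (j + 1) := by
  induction k with
  | zero =>
    refine ⟨0, h0.le, ?_⟩
    simpa [h0] using hm (Nat.lt_succ_self 0)
  | succ k ih =>
    obtain ⟨j, hj1, hj2⟩ := ih
    rcases lt_or_ge (k + 1) (N (j + 1)) with h | h
    · exact ⟨j, by omega, h⟩
    · have h1 : k + 1 = N (j + 1) := by omega
      have h2 := hm (Nat.lt_succ_self (j + 1))
      simp only [Nat.succ_eq_add_one] at h2
      exact ⟨j + 1, h1.ge, by omega⟩

end

end SlowConvAux

open SlowConvAux


set_option maxHeartbeats 2000000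

/-- Arbitrarily slow convergence of the three-operator splitting: in
`H = ℓ²(ℕ; ℝ²)`, for every function `F` strictly decreasing from `(0,1)` to `0`,
there exist closed subspaces `U, V` with `U ∩ V = {0}` (given together with their
orthogonal projections `P_U`, `P_V`) and an initial point `z⁰` such that the
iterates of `T = I - P_V + (1/(1+a)) P_U ∘ (P_V - I)` (the splitting operator for
`f = ι_U + (a/2)‖·‖²`, `g = ι_V`, `h = (1/2)‖·‖²`, `γ = 1`, `λ_k ≡ 1`) converge
strongly to the solution `z* = 0` but satisfy `‖z^k - z*‖ ≥ e⁻¹ F(k)` for all `k`. -/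
theorem arbitrarily_slow_convergence
    (a : ℝ) (ha : 0 ≤ a) (F : ℝ → ℝ)
    (hF1 : ∀ t : ℝ, 0 ≤ t → F t ∈ Set.Ioo (0 : ℝ) 1)
    (hF2 : StrictAntiOn F (Set.Ici 0))
    (hF3 : Tendsto F atTop (nhds 0)) :
    ∃ (U V : Submodule ℝ (lp (fun _ : ℕ => EuclideanSpace ℝ (Fin 2)) 2))
      (PU PV : lp (fun _ : ℕ => EuclideanSpace ℝ (Fin 2)) 2 →
        lp (fun _ : ℕ => EuclideanSpace ℝ (Fin 2)) 2)
      (z0 : lp (fun _ : ℕ => EuclideanSpace ℝ (Fin 2)) 2),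
      U ⊓ V = ⊥ ∧ IsClosed (U : Set (lp (fun _ : ℕ => EuclideanSpace ℝ (Fin 2)) 2)) ∧
      IsClosed (V : Set (lp (fun _ : ℕ => EuclideanSpace ℝ (Fin 2)) 2)) ∧
      (∀ x, PU x ∈ U) ∧ (∀ x, x - PU x ∈ Uᗮ) ∧
      (∀ x, PV x ∈ V) ∧ (∀ x, x - PV x ∈ Vᗮ) ∧
      (let T := fun x => x - PV x + (1 / (1 + a)) • PU (PV x - x)
       (∀ k : ℕ, Real.exp (-1) * F k ≤ ‖T^[k] z0 - 0‖) ∧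
       Tendsto (fun k => T^[k] z0) atTop (nhds 0)) := by

  classical
  have h1a : (0 : ℝ) < 1 + a := by linarith
  set c : ℝ := 1 / (1 + a) with hc_def
  have hc0 : 0 < c := by positivity
  have hc1 : c ≤ 1 := by
    rw [hc_def, div_le_one h1a]; linarith
  -- the cut-off function M
  have hFn : Tendsto (fun n : ℕ => F n) atTop (nhds 0) :=
    hF3.comp tendsto_natCast_atTop_atTop
  have hMex : ∀ k : ℕ, ∃ m : ℕ, ∀ n : ℕ, m ≤ n → F n ≤ (1 / 2 : ℝ) ^ k := by
    intro k
    have : ∀ᶠ n : ℕ in atTop, F n < (1 / 2 : ℝ) ^ k :=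
      hFn.eventually_lt_const (by positivity)
    obtain ⟨m, hm⟩ := eventually_atTop.1 this
    exact ⟨m, fun n hn => (hm n hn).le⟩
  choose M hM using hMex
  obtain ⟨N, hN0, hNmono, hNA, hNM⟩ := exists_N M (⌈a⌉₊ + 1)
  have hN1 : ∀ k, 1 ≤ N (k + 1) := fun k => le_trans (by omega) (hNA k)
  have hNa : ∀ k, 1 + a ≤ (N (k + 1) : ℝ) := by
    intro k
    have h1 : (⌈a⌉₊ + 1 : ℕ) ≤ N (k + 1) := hNA k
    have h2 : a ≤ (⌈a⌉₊ : ℝ) := Nat.le_ceil a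
    have h3 : ((⌈a⌉₊ + 1 : ℕ) : ℝ) ≤ (N (k + 1) : ℝ) := by exact_mod_cast h1
    push_cast at h3
    linarith
  -- the sequences
  set t : ℕ → ℝ := fun k => F (N k) with ht_def
  have ht_mem : ∀ k, t k ∈ Set.Ioo (0 : ℝ) 1 := fun k => hF1 _ (Nat.cast_nonneg _)
  have ht_bound : ∀ k, t k ≤ 2 * (1 / 2 : ℝ) ^ k := by
    intro k
    cases k with
    | zero =>
      have := (ht_mem 0).2
      simp only [pow_zero, mul_one]
      linarith
    | succ j =>
      have h1 : F (N (j + 1)) ≤ (1 / 2 : ℝ) ^ (j + 1) := hM (j + 1) _ (hNM j)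
      have h2 : (0 : ℝ) ≤ (1 / 2 : ℝ) ^ (j + 1) := by positivity
      calc t (j + 1) ≤ (1 / 2 : ℝ) ^ (j + 1) := h1
      _ ≤ 2 * (1 / 2 : ℝ) ^ (j + 1) := by linarith
  set b : ℕ → ℝ := fun k => Real.exp (-(1 / (N (k + 1) : ℝ))) with hb_def
  have hNpos : ∀ k, (0 : ℝ) < (N (k + 1) : ℝ) := by
    intro k; exact_mod_cast Nat.lt_of_lt_of_le Nat.zero_lt_one (hN1 k)
  have hb0 : ∀ k, 0 < b k := fun k => Real.exp_pos _
  have hb1 : ∀ k, b k < 1 := by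
    intro k
    apply Real.exp_lt_one_iff.2
    have := hNpos k
    simp only [neg_lt, neg_zero]
    positivity

  have hbN : ∀ k, 1 - b k ≤ 1 / (N (k + 1) : ℝ) := by
    intro k
    have h := Real.add_one_le_exp (-(1 / (N (k + 1) : ℝ)))
    have hb_eq : b k = Real.exp (-(1 / (N (k + 1) : ℝ))) := rfl
    rw [hb_eq]
    linarith
  set s2 : ℕ → ℝ := fun k => (1 - b k) * (1 + a) with hs2_def
  have hs2pos : ∀ k, 0 < s2 k := fun k => mul_pos (by linarith [hb1 k]) h1a
  have hs2le : ∀ k, s2 k ≤ 1 := by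
    intro k
    have h1 := hbN k
    have h2 := hNa k
    have h3 := hNpos k
    have h4 : (1 - b k) * (1 + a) ≤ (1 / (N (k + 1) : ℝ)) * (1 + a) :=
      mul_le_mul_of_nonneg_right h1 (by linarith)
    have h5 : (1 / (N (k + 1) : ℝ)) * (1 + a) ≤ 1 := by
      rw [div_mul_eq_mul_div, one_mul, div_le_one h3]
      linarith
    exact le_trans h4 h5
  set s : ℕ → ℝ := fun k => Real.sqrt (s2 k) with hs_def
  set p : ℕ → ℝ := fun k => Real.sqrt (1 - s2 k) with hp_def
  have hs_sq : ∀ k, s k ^ 2 = s2 k := fun k => Real.sq_sqrt (hs2pos k).le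
  have hp_sq : ∀ k, p k ^ 2 = 1 - s2 k := fun k => Real.sq_sqrt (by linarith [hs2le k])
  have hs_pos : ∀ k, 0 < s k := fun k => Real.sqrt_pos.2 (hs2pos k)
  have hs_le1 : ∀ k, s k ≤ 1 := fun k => Real.sqrt_le_one.mpr (hs2le k)
  have hp_nonneg : ∀ k, 0 ≤ p k := fun k => Real.sqrt_nonneg _
  have hp_le1 : ∀ k, p k ≤ 1 := fun k => Real.sqrt_le_one.mpr (by linarith [(hs2pos k)])
  set u : ℕ → E2 := fun k => vec (p k) (s k) with hu_def
  have hu : ∀ i, ‖u i‖ = 1 := by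
    intro i
    rw [hu_def]
    simp only []
    rw [norm_vec, hp_sq, hs_sq]
    simp
  set e0f : ℕ → E2 := fun _ => vec 1 0 with he0_def
  have he0 : ∀ i, ‖e0f i‖ = 1 := by
    intro i
    rw [he0_def]
    simp only []
    rw [norm_vec]
    norm_num
  have hbc : ∀ k, 1 - c * s k ^ 2 = b k := by
    intro k
    rw [hs_sq, hs2_def, hc_def]
    field_simp
    ring
  set v : ℕ → E2 := fun k => vec (-(c * s k * p k)) (b k) with hv_def
  have hv_le2 : ∀ k, ‖v k‖ ≤ 2 := by
    intro k
    rw [hv_def]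
    simp only []
    rw [norm_vec]
    have h1 : (-(c * s k * p k)) ^ 2 ≤ 1 := by
      have h3 : 0 ≤ c * s k * p k :=
        mul_nonneg (mul_nonneg hc0.le (hs_pos k).le) (hp_nonneg k)
      have h4 : c * s k * p k ≤ 1 := by
        calc c * s k * p k ≤ 1 * 1 * 1 := by
              apply mul_le_mul (mul_le_mul hc1 (hs_le1 k) (hs_pos k).le (by norm_num))
                (hp_le1 k) (hp_nonneg k) (by norm_num)
          _ = 1 := by norm_num
      nlinarith
    have h2 : b k ^ 2 ≤ 1 := by nlinarith [hb0 k, hb1 k]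
    calc Real.sqrt ((-(c * s k * p k)) ^ 2 + b k ^ 2)
        ≤ Real.sqrt (2 ^ 2) := Real.sqrt_le_sqrt (by nlinarith)
      _ = 2 := Real.sqrt_sq (by norm_num)
  -- the iterate family
  have hmemz : ∀ k : ℕ, Memℓp (fun i => (t i * b i ^ k) • v i) 2 := by
    intro k
    apply memℓp_gen
    have h2 : ((2 : ℝ≥0∞)).toReal = 2 := by norm_num
    rw [h2]
    have key : ∀ i : ℕ, ‖(t i * b i ^ k) • v i‖ ≤ 4 * (1 / 2 : ℝ) ^ i := by
      intro i
      rw [norm_smul, Real.norm_eq_abs]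
      have h0t := (ht_mem i).1
      have hbk : b i ^ k ≤ 1 := pow_le_one₀ (hb0 i).le (hb1 i).le
      have habs : |t i * b i ^ k| = t i * b i ^ k :=
        abs_of_nonneg (mul_nonneg h0t.le (pow_nonneg (hb0 i).le k))
      rw [habs]
      calc t i * b i ^ k * ‖v i‖ ≤ (2 * (1 / 2 : ℝ) ^ i) * 1 * 2 := by
            apply mul_le_mul _ (hv_le2 i) (norm_nonneg _) (by positivity)
            calc t i * b i ^ k ≤ t i * 1 := by
                  apply mul_le_mul_of_nonneg_left hbk h0t.le
              _ = t i := mul_one _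
              _ ≤ 2 * (1 / 2 : ℝ) ^ i := ht_bound i
              _ = 2 * (1 / 2 : ℝ) ^ i * 1 := (mul_one _).symm
        _ = 4 * (1 / 2 : ℝ) ^ i := by ring
    have hsum : Summable (fun i : ℕ => (4 * (1 / 2 : ℝ) ^ i) ^ 2) := by
      have hpow : ∀ i : ℕ, (4 * (1 / 2 : ℝ) ^ i) ^ 2 = 16 * (1 / 4 : ℝ) ^ i := by
        intro i
        have h14 : ((1 / 2 : ℝ) ^ i) ^ 2 = (1 / 4 : ℝ) ^ i := by
          rw [← pow_mul, mul_comm, pow_mul]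
          norm_num
        rw [mul_pow, h14]
        norm_num
      rw [funext hpow]
      exact (summable_geometric_of_lt_one (by norm_num) (by norm_num)).mul_left 16
    apply Summable.of_nonneg_of_le (fun i => by positivity) _ hsum
    intro i
    have hk := key i
    have hn := norm_nonneg ((t i * b i ^ k) • v i)
    have hrw : ∀ x : ℝ, 0 ≤ x → x ^ (2 : ℝ) = x ^ (2 : ℕ) := by
      intro x hx
      rw [← Real.rpow_natCast x 2]
      norm_num
    rw [hrw _ hn]
    gcongr
  set z : ℕ → Hsp := fun k => ⟨fun i => (t i * b i ^ k) • v i, hmemz k⟩ with hz_def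
  have hz_apply : ∀ k i, (z k : ∀ _ : ℕ, E2) i = (t i * b i ^ k) • v i := fun k i => rfl
  -- now provide the witnesses
  refine ⟨DiagU u, DiagU e0f, Pmap u hu, Pmap e0f he0, z 0, ?_,
    DiagU_closed u, DiagU_closed e0f,
    Pmap_mem_DiagU u hu, sub_Pmap_mem_orth u hu,
    Pmap_mem_DiagU e0f he0, sub_Pmap_mem_orth e0f he0, ?_⟩
  · -- U ⊓ V = ⊥
    rw [eq_bot_iff]
    intro x hx
    obtain ⟨hxU, hxV⟩ := Submodule.mem_inf.1 hx
    rw [Submodule.mem_bot]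
    apply lp.ext
    funext i
    obtain ⟨r, hr⟩ := hxU i
    obtain ⟨r', hr'⟩ := hxV i
    have h1 : (x : ∀ _ : ℕ, E2) i 1 = r * s i := by
      rw [hr, hu_def]; simp
    have h1' : (x : ∀ _ : ℕ, E2) i 1 = 0 := by
      rw [hr', he0_def]; simp
    have hr0 : r = 0 := by
      have := hs_pos i
      rw [h1] at h1'
      rcases mul_eq_zero.1 h1' with h | h
      · exact h
      · exact absurd h this.ne'
    rw [lp.coeFn_zero, Pi.zero_apply, hr, hr0, zero_smul]
  · -- the dynamics
    intro T
    have hTz : ∀ k, T (z k) = z (k + 1) := by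
      intro k
      apply lp.ext
      funext i
      have hT_apply : (T (z k) : ∀ _ : ℕ, E2) i
          = z k i - proj (e0f i) (z k i)
            + c • proj (u i) (proj (e0f i) (z k i) - z k i) := by
        show ((z k - Pmap e0f he0 (z k)
          + c • Pmap u hu (Pmap e0f he0 (z k) - z k)) : Hsp) i = _
        simp only [lp.coeFn_add, lp.coeFn_sub, lp.coeFn_smul, Pi.add_apply,
          Pi.sub_apply, Pi.smul_apply, Pmap_apply]
      rw [hT_apply]
      have he0i : e0f i = vec 1 0 := by rw [he0_def]
      have hui : u i = vec (p i) (s i) := by rw [hu_def]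
      have hvi : v i = vec (-(c * s i * p i)) (b i) := by rw [hv_def]
      rw [he0i, hui]
      rw [block_eq c (s i) (p i) (b i) (hbc i) ((z k : ∀ _ : ℕ, E2) i)]
      simp only [hz_apply]
      rw [smul_coord, ← hvi]
      have hv1 : v i 1 = b i := by rw [hvi]; simp
      rw [hv1]
      congr 1
      ring
    have hiter : ∀ k, T^[k] (z 0) = z k := by
      intro k
      induction k with
      | zero => rfl
      | succ k ih => rw [Function.iterate_succ_apply', ih, hTz]
    constructor
    · -- slow convergence lower bound
      intro k
      rw [hiter, sub_zero]
      obtain ⟨j, hj1, hj2⟩ := exists_block hN0 hNmono k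
      have hFk_pos := (hF1 k (Nat.cast_nonneg k)).1
      have hFk_le : F k ≤ t j := by
        have htj : t j = F (N j) := rfl
        rw [htj]
        rcases eq_or_lt_of_le hj1 with h | h
        · rw [h]
        · exact le_of_lt (hF2 (Set.mem_Ici.2 (Nat.cast_nonneg (N j)))
            (Set.mem_Ici.2 (Nat.cast_nonneg k)) (by exact_mod_cast h))
      have hexp : Real.exp (-1) ≤ b j ^ (k + 1) := by
        have hb_eq : b j ^ (k + 1)
            = Real.exp ((k + 1 : ℕ) * (-(1 / (N (j + 1) : ℝ)))) := by
          rw [Real.exp_nat_mul]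
        rw [hb_eq]
        apply Real.exp_le_exp.2
        have hNp := hNpos j
        have hk1 : ((k : ℝ) + 1) ≤ (N (j + 1) : ℝ) := by exact_mod_cast hj2
        rw [mul_neg, neg_le_neg_iff, mul_one_div, div_le_one hNp]
        push_cast
        linarith
      have hlow : Real.exp (-1) * F k ≤ t j * b j ^ (k + 1) := by
        calc Real.exp (-1) * F k ≤ b j ^ (k + 1) * t j :=
              mul_le_mul hexp hFk_le hFk_pos.le (pow_nonneg (hb0 j).le _)
          _ = t j * b j ^ (k + 1) := mul_comm _ _
      refine le_trans hlow ?_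
      have e1 : |(z k : ∀ _ : ℕ, E2) j 1| ≤ ‖(z k : ∀ _ : ℕ, E2) j‖ :=
        abs_coord_le _ _
      have e2 : ‖(z k : ∀ _ : ℕ, E2) j‖ ≤ ‖z k‖ :=
        lp.norm_apply_le_norm (by norm_num) (z k) j
      have e3 : (z k : ∀ _ : ℕ, E2) j 1 = t j * b j ^ k * b j := by
        rw [hz_apply, smul_coord, hv_def]
        simp
      have e4 : t j * b j ^ (k + 1) = |(z k : ∀ _ : ℕ, E2) j 1| := by
        have hnn : (0 : ℝ) ≤ t j * b j ^ k * b j :=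
          mul_nonneg (mul_nonneg (ht_mem j).1.le (pow_nonneg (hb0 j).le k)) (hb0 j).le
        rw [e3, abs_of_nonneg hnn]
        ring
      rw [e4]
      exact le_trans e1 e2
    · -- strong convergence to 0
      have h2t : ((2 : ℝ≥0∞)).toReal = 2 := by norm_num
      have hrw : ∀ x : ℝ, 0 ≤ x → x ^ (2 : ℝ) = x ^ (2 : ℕ) := by
        intro x hx
        rw [← Real.rpow_natCast x 2]
        norm_num
      have hS : Tendsto (fun k => ∑' i, ‖(z k : ∀ _ : ℕ, E2) i‖ ^ (2 : ℝ))
          atTop (nhds 0) := by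
        have h0' : (0 : ℝ) = ∑' _ : ℕ, (0 : ℝ) := by simp
        rw [h0']
        apply tendsto_tsum_of_dominated_convergence
          (bound := fun i => (4 * (1 / 2 : ℝ) ^ i) ^ 2)
        · have hpow : ∀ i : ℕ, (4 * (1 / 2 : ℝ) ^ i) ^ 2 = 16 * (1 / 4 : ℝ) ^ i := by
            intro i
            have h14 : ((1 / 2 : ℝ) ^ i) ^ 2 = (1 / 4 : ℝ) ^ i := by
              rw [← pow_mul, mul_comm, pow_mul]
              norm_num
            rw [mul_pow, h14]
            norm_num
          rw [funext hpow]
          exact (summable_geometric_of_lt_one (by norm_num) (by norm_num)).mul_left 16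
        · intro i
          have hnz : ∀ k : ℕ, ‖(z k : ∀ _ : ℕ, E2) i‖ ^ (2 : ℝ)
              = (t i * ‖v i‖) ^ 2 * (b i ^ 2) ^ k := by
            intro k
            have h1 : (0 : ℝ) ≤ t i * b i ^ k :=
              mul_nonneg (ht_mem i).1.le (pow_nonneg (hb0 i).le k)
            rw [hz_apply, norm_smul, Real.norm_eq_abs, abs_of_nonneg h1]
            rw [hrw _ (mul_nonneg h1 (norm_nonneg (v i)))]
            ring
          rw [funext hnz]
          have hb2 : b i ^ 2 < 1 := pow_lt_one₀ (hb0 i).le (hb1 i) (by norm_num)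
          have hlim := (tendsto_pow_atTop_nhds_zero_of_lt_one (sq_nonneg (b i)) hb2).const_mul
            ((t i * ‖v i‖) ^ 2)
          rw [mul_zero] at hlim
          exact hlim
        · apply Eventually.of_forall
          intro k i
          have h0t := (ht_mem i).1
          have hbk : b i ^ k ≤ 1 := pow_le_one₀ (hb0 i).le (hb1 i).le
          have key : ‖(z k : ∀ _ : ℕ, E2) i‖ ≤ 4 * (1 / 2 : ℝ) ^ i := by
            rw [hz_apply, norm_smul, Real.norm_eq_abs,
              abs_of_nonneg (mul_nonneg h0t.le (pow_nonneg (hb0 i).le k))]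
            calc t i * b i ^ k * ‖v i‖ ≤ (2 * (1 / 2 : ℝ) ^ i) * 1 * 2 := by
                  apply mul_le_mul _ (hv_le2 i) (norm_nonneg _) (by positivity)
                  calc t i * b i ^ k ≤ t i * 1 :=
                        mul_le_mul_of_nonneg_left hbk h0t.le
                    _ = t i := mul_one _
                    _ ≤ 2 * (1 / 2 : ℝ) ^ i := ht_bound i
                    _ = 2 * (1 / 2 : ℝ) ^ i * 1 := (mul_one _).symm
              _ = 4 * (1 / 2 : ℝ) ^ i := by ring
          have hnn := norm_nonneg ((z k : ∀ _ : ℕ, E2) i)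
          rw [Real.norm_eq_abs, abs_of_nonneg (Real.rpow_nonneg hnn 2)]
          rw [hrw _ hnn]
          gcongr
      have hnorm : Tendsto (fun k => ‖z k‖) atTop (nhds 0) := by
        have hnorm_eq : ∀ k : ℕ, ‖z k‖
            = (∑' i, ‖(z k : ∀ _ : ℕ, E2) i‖ ^ (2 : ℝ)) ^ ((1 : ℝ) / 2) := by
          intro k
          have := lp.norm_eq_tsum_rpow (p := 2) (by norm_num) (z k)
          rw [h2t] at this
          exact this
        rw [funext hnorm_eq]
        have hcont : Tendsto (fun x : ℝ => x ^ ((1 : ℝ) / 2)) (nhds 0)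
            (nhds ((0 : ℝ) ^ ((1 : ℝ) / 2))) :=
          (Real.continuousAt_rpow_const 0 ((1 : ℝ) / 2) (Or.inr (by norm_num))).tendsto
        rw [Real.zero_rpow (by norm_num)] at hcont
        exact hcont.comp hS
      have hzz : Tendsto (fun k => z k) atTop (nhds 0) :=
        tendsto_zero_iff_norm_tendsto_zero.mpr hnorm
      have hfun : (fun k => T^[k] (z 0)) = fun k => z k := funext hiter
      rw [hfun]
      exact hzz
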